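/- arXiv:0708.1165 — 2 statements merged into one kernel-verified Lean document; each statement's English description precedes it below -/
import Mathlib

section
/- Let φ_1, …, φ_N be an orthonormal system in L^2(ℝ, ℂ) with each φ_n in H^1(ℝ). Define ρ(x) = Σ_{n=1}^N |φ_n(x)|^2. Then ∫_ℝ ρ(x)^3 dx ≤ Σ_{n=1}^N ∫_ℝ |φ_n'(x)|^2 dx. -/
open MeasureTheory

open MeasureTheory Filter Topology Set
open scoped ComplexConjugate

noncomputable section

namespace DensityCubeAux

/-- Product of two (real- or complex-valued) L² functions is integrable. -/
lemma integrable_mul_L2 {𝕜 : Type*} [RCLike 𝕜] {f g : ℝ → 𝕜}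
    (hf : MemLp f 2 (volume : Measure ℝ)) (hg : MemLp g 2 (volume : Measure ℝ)) :
    Integrable (fun x => f x * g x) (volume : Measure ℝ) := by
  have hf2 : Integrable (fun x => ‖f x‖ ^ 2) (volume : Measure ℝ) :=
    (memLp_two_iff_integrable_sq_norm hf.1).1 hf
  have hg2 : Integrable (fun x => ‖g x‖ ^ 2) (volume : Measure ℝ) :=
    (memLp_two_iff_integrable_sq_norm hg.1).1 hg
  refine Integrable.mono' (hf2.add hg2) (hf.1.mul hg.1) (Eventually.of_forall fun x => ?_)
  have h1 : ‖f x * g x‖ ≤ ‖f x‖ * ‖g x‖ := norm_mul_le _ _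
  simp only [Pi.add_apply]
  nlinarith [sq_nonneg (‖f x‖ - ‖g x‖), norm_nonneg (f x), norm_nonneg (g x)]

lemma memL2_conj {f : ℝ → ℂ} (hf : MemLp f 2 (volume : Measure ℝ)) :
    MemLp (fun x => conj (f x)) 2 (volume : Measure ℝ) := by
  refine hf.of_le (Complex.continuous_conj.comp_aestronglyMeasurable hf.1)
    (Eventually.of_forall fun x => ?_)
  simp

/-- A nonnegative integrable function which converges at `atBot` has limit `0`. -/
lemma limit_zero_atBot {h : ℝ → ℝ} (hi : Integrable h (volume : Measure ℝ))
    (hnn : ∀ x, 0 ≤ h x) {L : ℝ} (hl : Tendsto h atBot (𝓝 L)) : L = 0 := by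
  by_contra hL0
  have hL : 0 ≤ L := ge_of_tendsto hl (Eventually.of_forall hnn)
  have hLpos : 0 < L := lt_of_le_of_ne hL (Ne.symm hL0)
  have h2 : ∀ᶠ x in atBot, L / 2 ≤ h x :=
    hl.eventually (eventually_ge_nhds (by linarith))
  obtain ⟨b, hb⟩ := eventually_atBot.1 h2
  have hfin := hi.measure_ge_lt_top (show (0:ℝ) < L / 2 by linarith)
  have hsub : Iic b ⊆ {x | L / 2 ≤ h x} := fun x hx => hb x hx
  have hmono : (volume : Measure ℝ) (Iic b) ≤ volume {x | L / 2 ≤ h x} :=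
    measure_mono hsub
  rw [Real.volume_Iic] at hmono
  simp only [top_le_iff] at hmono
  rw [hmono] at hfin
  exact absurd hfin (by simp)

lemma limit_zero_atTop {h : ℝ → ℝ} (hi : Integrable h (volume : Measure ℝ))
    (hnn : ∀ x, 0 ≤ h x) {L : ℝ} (hl : Tendsto h atTop (𝓝 L)) : L = 0 := by
  by_contra hL0
  have hL : 0 ≤ L := ge_of_tendsto hl (Eventually.of_forall hnn)
  have hLpos : 0 < L := lt_of_le_of_ne hL (Ne.symm hL0)
  have h2 : ∀ᶠ x in atTop, L / 2 ≤ h x :=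
    hl.eventually (eventually_ge_nhds (by linarith))
  obtain ⟨b, hb⟩ := eventually_atTop.1 h2
  have hfin := hi.measure_ge_lt_top (show (0:ℝ) < L / 2 by linarith)
  have hsub : Ici b ⊆ {x | L / 2 ≤ h x} := fun x hx => hb x hx
  have hmono : (volume : Measure ℝ) (Ici b) ≤ volume {x | L / 2 ≤ h x} :=
    measure_mono hsub
  rw [Real.volume_Ici] at hmono
  simp only [top_le_iff] at hmono
  rw [hmono] at hfin
  exact absurd hfin (by simp)

/-- Cauchy–Schwarz for integrals of nonnegative real functions. -/
lemma sq_integral_mul_le {u v : ℝ → ℝ} (hu : MemLp u 2 (volume : Measure ℝ))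
    (hv : MemLp v 2 (volume : Measure ℝ)) (hunn : ∀ x, 0 ≤ u x) (hvnn : ∀ x, 0 ≤ v x) :
    (∫ s, u s * v s) ^ 2 ≤ (∫ s, u s ^ 2) * (∫ s, v s ^ 2) := by
  have hu2 : Integrable (fun s => u s ^ 2) (volume : Measure ℝ) := hu.integrable_sq
  have hv2 : Integrable (fun s => v s ^ 2) (volume : Measure ℝ) := hv.integrable_sq
  have huv : Integrable (fun s => u s * v s) (volume : Measure ℝ) := integrable_mul_L2 hu hv
  set A := ∫ s, u s ^ 2 with hA
  set B := ∫ s, v s ^ 2 with hB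
  set S := ∫ s, u s * v s with hS
  have hAnn : 0 ≤ A := integral_nonneg fun s => sq_nonneg _
  have hBnn : 0 ≤ B := integral_nonneg fun s => sq_nonneg _
  have hSnn : 0 ≤ S := integral_nonneg fun s => mul_nonneg (hunn s) (hvnn s)
  have key : ∀ t t' : ℝ, 0 < t → 0 < t' → t * t' = 1 → 2 * S ≤ t * A + t' * B := by
    intro t t' ht ht' htt'
    have ptw : ∀ s, 2 * (u s * v s) ≤ t * u s ^ 2 + t' * v s ^ 2 := by
      intro s
      have hexp : t * u s ^ 2 + t' * v s ^ 2 - 2 * (u s * v s)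
          = t' * (t * u s - v s) ^ 2 + (1 - t * t') * (t * u s ^ 2 - 2 * (u s * v s)) := by
        ring
      nlinarith [mul_nonneg ht'.le (sq_nonneg (t * u s - v s))]
    have hint : Integrable (fun s => t * u s ^ 2 + t' * v s ^ 2) (volume : Measure ℝ) :=
      (hu2.const_mul t).add (hv2.const_mul t')
    have := integral_mono (huv.const_mul 2) hint (fun s => ptw s)
    calc 2 * S = ∫ s, 2 * (u s * v s) := by rw [integral_const_mul]
    _ ≤ ∫ s, (t * u s ^ 2 + t' * v s ^ 2) := this
    _ = t * A + t' * B := by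
        rw [integral_add (hu2.const_mul t) (hv2.const_mul t'), integral_const_mul,
          integral_const_mul]
  rcases eq_or_lt_of_le hAnn with hA0 | hApos
  · -- A = 0 : u = 0 a.e., so S = 0
    have hu0 : (fun s => u s ^ 2) =ᵐ[(volume : Measure ℝ)] 0 :=
      (integral_eq_zero_iff_of_nonneg (fun s => sq_nonneg _) hu2).1 hA0.symm
    have huv0 : (fun s => u s * v s) =ᵐ[(volume : Measure ℝ)] 0 := by
      filter_upwards [hu0] with s hs
      have : u s = 0 := by
        have := hs
        simp only [Pi.zero_apply] at this
        nlinarith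
      simp [this]
    have hS0 : S = 0 := by rw [hS, integral_congr_ae huv0]; simp
    rw [hS0]
    simpa using mul_nonneg hAnn hBnn
  rcases eq_or_lt_of_le hBnn with hB0 | hBpos
  · have hv0 : (fun s => v s ^ 2) =ᵐ[(volume : Measure ℝ)] 0 :=
      (integral_eq_zero_iff_of_nonneg (fun s => sq_nonneg _) hv2).1 hB0.symm
    have huv0 : (fun s => u s * v s) =ᵐ[(volume : Measure ℝ)] 0 := by
      filter_upwards [hv0] with s hs
      have : v s = 0 := by
        have := hs
        simp only [Pi.zero_apply] at this
        nlinarith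
      simp [this]
    have hS0 : S = 0 := by rw [hS, integral_congr_ae huv0]; simp
    rw [hS0]
    simpa using mul_nonneg hAnn hBnn
  · -- A, B > 0
    have ht : (0:ℝ) < Real.sqrt (B / A) := Real.sqrt_pos.2 (div_pos hBpos hApos)
    have ht' : (0:ℝ) < Real.sqrt (A / B) := Real.sqrt_pos.2 (div_pos hApos hBpos)
    have htt' : Real.sqrt (B / A) * Real.sqrt (A / B) = 1 := by
      rw [← Real.sqrt_mul (by positivity)]
      rw [show B / A * (A / B) = 1 by field_simp]
      exact Real.sqrt_one
    have h2S := key _ _ ht ht' htt'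
    have htA : Real.sqrt (B / A) * A = Real.sqrt (A * B) := by
      rw [show A * B = B / A * A ^ 2 by field_simp, Real.sqrt_mul (by positivity),
        Real.sqrt_sq hApos.le]
    have htB : Real.sqrt (A / B) * B = Real.sqrt (A * B) := by
      rw [show A * B = A / B * B ^ 2 by field_simp, Real.sqrt_mul (by positivity),
        Real.sqrt_sq hBpos.le]
    have hSle : S ≤ Real.sqrt (A * B) := by
      rw [htA, htB] at h2S; linarith
    calc S ^ 2 ≤ Real.sqrt (A * B) ^ 2 := pow_le_pow_left₀ hSnn hSle 2
    _ = A * B := Real.sq_sqrt (mul_nonneg hAnn hBnn)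


/-- 1D Agmon inequality: `‖f x‖² ≤ ‖f‖_{L²} ‖f'‖_{L²}` in squared form. -/
lemma agmon {f : ℝ → ℂ} (hd : Differentiable ℝ f) (h2 : MemLp f 2 (volume : Measure ℝ))
    (h2' : MemLp (deriv f) 2 (volume : Measure ℝ)) (x : ℝ) :
    ‖f x‖ ^ 2 * ‖f x‖ ^ 2 ≤ (∫ s, ‖f s‖ ^ 2) * (∫ s, ‖deriv f s‖ ^ 2) := by
  classical
  set h : ℝ → ℝ := fun s => ‖f s‖ ^ 2 with hh
  set h' : ℝ → ℝ := fun s =>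
    2 * ((f s).re * (deriv f s).re) + 2 * ((f s).im * (deriv f s).im) with hh'
  have hnorm : ∀ t : ℝ, ‖f t‖ ^ 2 = (f t).re ^ 2 + (f t).im ^ 2 := by
    intro t
    rw [Complex.sq_norm, Complex.normSq_apply]
    ring
  have hnn : ∀ t, 0 ≤ h t := fun t => sq_nonneg _
  -- derivative of h
  have hder : ∀ s, HasDerivAt h (h' s) s := by
    intro s
    have hf : HasDerivAt f (deriv f s) s := (hd s).hasDerivAt
    have hre : HasDerivAt (fun t => (f t).re) ((deriv f s).re) s :=
      (Complex.reCLM.hasFDerivAt.comp_hasDerivAt s hf)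
    have him : HasDerivAt (fun t => (f t).im) ((deriv f s).im) s :=
      (Complex.imCLM.hasFDerivAt.comp_hasDerivAt s hf)
    have := ((hre.mul hre).add (him.mul him))
    have heq : (fun t => (f t).re * (f t).re + (f t).im * (f t).im) = h := by
      funext t
      rw [hh]; simp only []
      rw [hnorm t]; ring
    change HasDerivAt (fun t => (f t).re * (f t).re + (f t).im * (f t).im) _ s at this
    rw [heq] at this
    convert this using 1
    rw [hh']; ring
  -- integrability of h and h'
  have hint : Integrable h (volume : Measure ℝ) :=
    (memLp_two_iff_integrable_sq_norm h2.1).1 h2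
  have hintf' : Integrable (fun s => ‖deriv f s‖ ^ 2) (volume : Measure ℝ) :=
    (memLp_two_iff_integrable_sq_norm h2'.1).1 h2'
  have hmeas' : AEStronglyMeasurable h' (volume : Measure ℝ) := by
    have h1 : AEStronglyMeasurable f (volume : Measure ℝ) := h2.1
    have h2m : AEStronglyMeasurable (deriv f) (volume : Measure ℝ) := h2'.1
    have hfre := Complex.continuous_re.comp_aestronglyMeasurable h1
    have hfim := Complex.continuous_im.comp_aestronglyMeasurable h1
    have hgre := Complex.continuous_re.comp_aestronglyMeasurable h2m
    have hgim := Complex.continuous_im.comp_aestronglyMeasurable h2m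
    exact ((hfre.mul hgre).const_mul 2).add ((hfim.mul hgim).const_mul 2)
  have hptCS : ∀ s, |h' s| ≤ 2 * (‖f s‖ * ‖deriv f s‖) := by
    intro s
    have hu : (0:ℝ) ≤ ‖f s‖ := norm_nonneg _
    have hv : (0:ℝ) ≤ ‖deriv f s‖ := norm_nonneg _
    have h1 : (h' s) ^ 2 ≤ (2 * (‖f s‖ * ‖deriv f s‖)) ^ 2 := by
      have e1 := hnorm s
      have e2 : ‖deriv f s‖ ^ 2 = (deriv f s).re ^ 2 + (deriv f s).im ^ 2 := by
        rw [Complex.sq_norm, Complex.normSq_apply]; ring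
      rw [hh']
      simp only []
      nlinarith [sq_nonneg ((f s).re * (deriv f s).im - (f s).im * (deriv f s).re)]
    calc |h' s| = Real.sqrt ((h' s) ^ 2) := (Real.sqrt_sq_eq_abs _).symm
    _ ≤ Real.sqrt ((2 * (‖f s‖ * ‖deriv f s‖)) ^ 2) := Real.sqrt_le_sqrt h1
    _ = 2 * (‖f s‖ * ‖deriv f s‖) := Real.sqrt_sq (by positivity)
  have hintuv : Integrable (fun s => ‖f s‖ * ‖deriv f s‖) (volume : Measure ℝ) :=
    integrable_mul_L2 (𝕜 := ℝ) h2.norm h2'.norm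
  have hint' : Integrable h' (volume : Measure ℝ) := by
    refine Integrable.mono' (hintuv.const_mul 2) hmeas' (Eventually.of_forall fun s => ?_)
    simpa using hptCS s
  -- FTC identities
  have hftc : ∀ a b : ℝ, ∫ t in a..b, h' t = h b - h a := by
    intro a b
    exact intervalIntegral.integral_eq_sub_of_hasDerivAt (fun t _ => hder t)
      (hint'.intervalIntegrable)
  have hE1 : h x = ∫ t in Iic x, h' t := by
    have htend : Tendsto (fun a : ℝ => ∫ t in a..x, h' t) atBot
        (𝓝 (∫ t in Iic x, h' t)) :=
      intervalIntegral_tendsto_integral_Iic x hint'.integrableOn tendsto_id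
    have htend2 : Tendsto h atBot (𝓝 (h x - ∫ t in Iic x, h' t)) := by
      have := tendsto_const_nhds (α := ℝ) (x := h x) |>.sub htend
      refine this.congr fun a => ?_
      rw [hftc a x]; ring
    have := limit_zero_atBot hint hnn htend2
    linarith
  have hE2 : h x = -∫ t in Ioi x, h' t := by
    have htend : Tendsto (fun b : ℝ => ∫ t in x..b, h' t) atTop
        (𝓝 (∫ t in Ioi x, h' t)) :=
      intervalIntegral_tendsto_integral_Ioi x hint'.integrableOn tendsto_id
    have htend2 : Tendsto h atTop (𝓝 (h x + ∫ t in Ioi x, h' t)) := by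
      have := tendsto_const_nhds (α := ℝ) (x := h x) |>.add htend
      refine this.congr fun b => ?_
      rw [hftc x b]; ring
    have := limit_zero_atTop hint hnn htend2
    linarith
  -- 2 h x ≤ ∫ |h'|
  have habs : Integrable (fun t => |h' t|) (volume : Measure ℝ) := hint'.abs
  have hsplit : (∫ t in Iic x, |h' t|) + ∫ t in Ioi x, |h' t| = ∫ t, |h' t| := by
    have := integral_add_compl (measurableSet_Iic (a := x)) habs
    rwa [Set.compl_Iic] at this
  have hb1 : ∫ t in Iic x, h' t ≤ ∫ t in Iic x, |h' t| :=
    integral_mono hint'.integrableOn habs.integrableOn fun t => le_abs_self _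
  have hb2 : -∫ t in Ioi x, h' t ≤ ∫ t in Ioi x, |h' t| := by
    rw [← integral_neg]
    exact integral_mono hint'.integrableOn.neg habs.integrableOn fun t => neg_le_abs _
  have h2hx : 2 * h x ≤ ∫ t, |h' t| := by
    have : 2 * h x = (∫ t in Iic x, h' t) + -∫ t in Ioi x, h' t := by
      rw [← hE1, ← hE2]; ring
    rw [this, ← hsplit]
    exact add_le_add hb1 hb2
  have hfin : h x ≤ ∫ s, ‖f s‖ * ‖deriv f s‖ := by
    have : ∫ t, |h' t| ≤ ∫ s, 2 * (‖f s‖ * ‖deriv f s‖) :=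
      integral_mono habs (hintuv.const_mul 2) fun s => hptCS s
    rw [integral_const_mul] at this
    linarith
  -- Cauchy-Schwarz
  have hCS := sq_integral_mul_le (u := fun s => ‖f s‖) (v := fun s => ‖deriv f s‖)
    h2.norm h2'.norm (fun s => norm_nonneg _) (fun s => norm_nonneg _)
  have hhx : 0 ≤ h x := hnn x
  rw [show (∫ s, ‖f s‖ ^ 2) = integral volume h from rfl] 
  calc ‖f x‖ ^ 2 * ‖f x‖ ^ 2 = (h x) ^ 2 := by rw [hh]; ring
  _ ≤ (∫ s, ‖f s‖ * ‖deriv f s‖) ^ 2 := pow_le_pow_left₀ hhx hfin 2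
  _ ≤ (∫ s, ‖f s‖ ^ 2) * (∫ s, ‖deriv f s‖ ^ 2) := hCS
  _ = integral volume h * (∫ s, ‖deriv f s‖ ^ 2) := rfl

/-- Expansion of the L² norm of a linear combination. -/
lemma integral_norm_sq_sum {N : ℕ} (c : Fin N → ℂ) (ψ : Fin N → ℝ → ℂ)
    (hψ : ∀ j, MemLp (ψ j) 2 (volume : Measure ℝ)) :
    ∫ s, ‖∑ j, c j * ψ j s‖ ^ 2
      = ∑ j, ∑ k, (c j * conj (c k) * ∫ s, ψ j s * conj (ψ k s)).re := by
  classical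
  have hterm : ∀ j k : Fin N, Integrable (fun s => ψ j s * conj (ψ k s))
      (volume : Measure ℝ) := fun j k => integrable_mul_L2 (hψ j) (memL2_conj (hψ k))
  have htermc : ∀ j k : Fin N,
      Integrable (fun s => c j * conj (c k) * (ψ j s * conj (ψ k s)))
        (volume : Measure ℝ) := fun j k => (hterm j k).const_mul _
  have htermcre : ∀ j k : Fin N,
      Integrable (fun s => (c j * conj (c k) * (ψ j s * conj (ψ k s))).re)
        (volume : Measure ℝ) := fun j k => by simpa using (htermc j k).re
  have expand : ∀ s : ℝ, ‖∑ j, c j * ψ j s‖ ^ 2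
      = ∑ j, ∑ k, (c j * conj (c k) * (ψ j s * conj (ψ k s))).re := by
    intro s
    have h1 : (‖∑ j, c j * ψ j s‖ : ℝ) ^ 2
        = ((∑ j, c j * ψ j s) * conj (∑ k, c k * ψ k s)).re := by
      rw [Complex.mul_conj]
      rw [Complex.sq_norm]
      simp
    rw [h1, map_sum, Finset.sum_mul_sum, Complex.re_sum]
    refine Finset.sum_congr rfl fun j _ => ?_
    rw [Complex.re_sum]
    refine Finset.sum_congr rfl fun k _ => ?_
    congr 1
    rw [map_mul]
    ring
  calc ∫ s, ‖∑ j, c j * ψ j s‖ ^ 2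
      = ∫ s, ∑ j, ∑ k, (c j * conj (c k) * (ψ j s * conj (ψ k s))).re := by
        exact integral_congr_ae (Eventually.of_forall fun s => expand s)
  _ = ∑ j, ∑ k, ∫ s, (c j * conj (c k) * (ψ j s * conj (ψ k s))).re := by
        rw [integral_finset_sum _ fun j _ =>
          integrable_finset_sum _ fun k _ => htermcre j k]
        exact Finset.sum_congr rfl fun j _ =>
          integral_finset_sum _ fun k _ => htermcre j k
  _ = ∑ j, ∑ k, (c j * conj (c k) * ∫ s, ψ j s * conj (ψ k s)).re := by
        refine Finset.sum_congr rfl fun j _ => Finset.sum_congr rfl fun k _ => ?_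
        rw [show (∫ s, (c j * conj (c k) * (ψ j s * conj (ψ k s))).re)
            = (∫ s, c j * conj (c k) * (ψ j s * conj (ψ k s))).re from by
          simpa using integral_re (htermc j k)]
        rw [integral_const_mul]

end DensityCubeAux

open DensityCubeAux in
/-- Generalized Sobolev (Lieb–Thirring kinetic energy) inequality for an
orthonormal system `φ₁, …, φ_N` in `L²(ℝ, ℂ)` of `H¹` functions:
with `ρ(x) = Σ_n |φ_n(x)|²`, one has `∫ ρ³ ≤ Σ_n ∫ |φ_n'|²`. -/
theorem density_cube_integral_le (N : ℕ) (φ : Fin N → ℝ → ℂ)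
    (hdiff : ∀ n, Differentiable ℝ (φ n))
    (hL2 : ∀ n, MemLp (φ n) 2 (volume : Measure ℝ))
    (hL2' : ∀ n, MemLp (deriv (φ n)) 2 (volume : Measure ℝ))
    (hortho : ∀ n m, ∫ x : ℝ, φ n x * (starRingEnd ℂ) (φ m x) =
      if n = m then 1 else 0) :
    ∫ x : ℝ, (∑ n, ‖φ n x‖ ^ 2) ^ 3 ≤ ∑ n, ∫ x : ℝ, ‖deriv (φ n) x‖ ^ 2 := by
  classical
  set M : Fin N → Fin N → ℂ :=
    fun j k => ∫ s, deriv (φ j) s * (starRingEnd ℂ) (deriv (φ k) s) with hM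
  set T : ℝ → ℝ :=
    fun x => ∑ j, ∑ k, ((starRingEnd ℂ) (φ j x) * φ k x * M j k).re with hT
  have hconj2 : ∀ j, MemLp (fun x => (starRingEnd ℂ) (φ j x)) 2 (volume : Measure ℝ) :=
    fun j => memL2_conj (hL2 j)
  have hprod : ∀ j k, Integrable (fun x => (starRingEnd ℂ) (φ j x) * φ k x)
      (volume : Measure ℝ) := fun j k => integrable_mul_L2 (hconj2 j) (hL2 k)
  have hTterm : ∀ j k, Integrable
      (fun x => ((starRingEnd ℂ) (φ j x) * φ k x * M j k).re) (volume : Measure ℝ) :=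
    fun j k => by simpa using ((hprod j k).mul_const (M j k)).re
  have hTint : Integrable T (volume : Measure ℝ) := by
    rw [hT]
    exact integrable_finset_sum _ fun j _ => integrable_finset_sum _ fun k _ => hTterm j k
  -- pointwise bound ρ(x)³ ≤ T(x)
  have hpoint : ∀ x, (∑ n, ‖φ n x‖ ^ 2) ^ 3 ≤ T x := by
    intro x
    set c : Fin N → ℂ := fun j => (starRingEnd ℂ) (φ j x) with hc
    set g : ℝ → ℂ := fun s => ∑ j, c j * φ j s with hg
    set g' : ℝ → ℂ := fun s => ∑ j, c j * deriv (φ j) s with hg'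
    have hgder : ∀ s, HasDerivAt g (g' s) s := by
      intro s
      refine (HasDerivAt.sum (u := Finset.univ) fun j _ =>
        ((hdiff j s).hasDerivAt.const_mul (c j))).congr_of_eventuallyEq
        (Eventually.of_forall fun t => ?_)
      simp [g, Finset.sum_apply]
    have hgdiff : Differentiable ℝ g := fun s => (hgder s).differentiableAt
    have hderiv_eq : deriv g = g' := funext fun s => (hgder s).deriv
    have hgL2 : MemLp g 2 (volume : Measure ℝ) := by
      rw [hg]
      exact memLp_finset_sum _ fun j _ => (hL2 j).const_mul (c j)
    have hg'L2 : MemLp (deriv g) 2 (volume : Measure ℝ) := by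
      rw [hderiv_eq, hg']
      exact memLp_finset_sum _ fun j _ => (hL2' j).const_mul (c j)
    have hkey := agmon hgdiff hgL2 hg'L2 x
    have hρnn : 0 ≤ ∑ n, ‖φ n x‖ ^ 2 := Finset.sum_nonneg fun n _ => sq_nonneg _
    have hA : (∫ s, ‖g s‖ ^ 2) = ∑ n, ‖φ n x‖ ^ 2 := by
      rw [hg, integral_norm_sq_sum c φ hL2]
      simp only [hortho, mul_ite, mul_one, mul_zero, apply_ite Complex.re,
        Complex.zero_re, Finset.sum_ite_eq, Finset.mem_univ, if_true]
      refine Finset.sum_congr rfl fun j _ => ?_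
      simp only [hc]
      rw [Complex.mul_conj, Complex.ofReal_re, Complex.normSq_conj, ← Complex.sq_norm]
    have hB : (∫ s, ‖deriv g s‖ ^ 2) = T x := by
      rw [hderiv_eq, hg', integral_norm_sq_sum c (fun j => deriv (φ j)) hL2', hT]
      refine Finset.sum_congr rfl fun j _ => Finset.sum_congr rfl fun k _ => ?_
      rw [hc]
      simp [Complex.conj_conj, M]
    have hval : ‖g x‖ ^ 2 = (∑ n, ‖φ n x‖ ^ 2) * (∑ n, ‖φ n x‖ ^ 2) := by
      have hgx : g x = ((∑ n, ‖φ n x‖ ^ 2 : ℝ) : ℂ) := by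
        rw [hg]
        rw [Complex.ofReal_sum]
        refine Finset.sum_congr rfl fun j _ => ?_
        rw [hc]
        rw [mul_comm, Complex.mul_conj]
        simp [Complex.normSq_eq_norm_sq]
      rw [hgx]
      rw [Complex.norm_real, Real.norm_eq_abs, abs_of_nonneg hρnn]
      ring
    have hTnn : 0 ≤ T x := by
      rw [← hB]; exact integral_nonneg fun s => sq_nonneg _
    rw [hval, hA, hB] at hkey
    rcases eq_or_lt_of_le hρnn with h0 | hpos
    · rw [← h0]; simpa using hTnn
    · nlinarith [hkey, hpos]
  -- integrability of ρ³ and conclusion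
  have hcont : Continuous fun x => (∑ n, ‖φ n x‖ ^ 2) ^ 3 := by
    exact (continuous_finset_sum _ fun n _ => ((hdiff n).continuous.norm.pow 2)).pow 3
  have hρ3int : Integrable (fun x => (∑ n, ‖φ n x‖ ^ 2) ^ 3) (volume : Measure ℝ) := by
    refine Integrable.mono' hTint hcont.aestronglyMeasurable
      (Eventually.of_forall fun x => ?_)
    have hρnn : 0 ≤ ∑ n, ‖φ n x‖ ^ 2 := Finset.sum_nonneg fun n _ => sq_nonneg _
    rw [Real.norm_eq_abs, abs_of_nonneg (by positivity)]
    exact hpoint x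
  have hmono := integral_mono hρ3int hTint hpoint
  have hTval : ∫ x, T x = ∑ n, ∫ x, ‖deriv (φ n) x‖ ^ 2 := by
    rw [hT]
    rw [integral_finset_sum _ fun j _ => integrable_finset_sum _ fun k _ => hTterm j k]
    rw [Finset.sum_congr rfl fun j _ => integral_finset_sum _ fun k _ => hTterm j k]
    have hterm : ∀ j k, (∫ x, ((starRingEnd ℂ) (φ j x) * φ k x * M j k).re)
        = if j = k then (M j j).re else 0 := by
      intro j k
      rw [show (∫ x, ((starRingEnd ℂ) (φ j x) * φ k x * M j k).re)
          = (∫ x, (starRingEnd ℂ) (φ j x) * φ k x * M j k).re from by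
        simpa using integral_re ((hprod j k).mul_const (M j k))]
      rw [integral_mul_const]
      have hcc : (fun x => (starRingEnd ℂ) (φ j x) * φ k x)
          = fun x => (starRingEnd ℂ) (φ j x * (starRingEnd ℂ) (φ k x)) := by
        funext x; rw [map_mul, Complex.conj_conj]
      rw [hcc, integral_conj, hortho]
      by_cases hjk : j = k
      · subst hjk; simp
      · simp [hjk]
    rw [Finset.sum_congr rfl fun j _ => Finset.sum_congr rfl fun k _ => hterm j k]
    simp only [Finset.sum_ite_eq, Finset.mem_univ, if_true]
    refine Finset.sum_congr rfl fun j _ => ?_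
    simp only [hM]
    have hMint : Integrable (fun s => deriv (φ j) s * (starRingEnd ℂ) (deriv (φ j) s))
        (volume : Measure ℝ) := integrable_mul_L2 (hL2' j) (memL2_conj (hL2' j))
    rw [show (∫ s, deriv (φ j) s * (starRingEnd ℂ) (deriv (φ j) s)).re
        = ∫ s, (deriv (φ j) s * (starRingEnd ℂ) (deriv (φ j) s)).re from by
      simpa using (integral_re hMint).symm]
    refine integral_congr_ae (Eventually.of_forall fun s => ?_)
    show (deriv (φ j) s * (starRingEnd ℂ) (deriv (φ j) s)).re = ‖deriv (φ j) s‖ ^ 2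
    rw [Complex.mul_conj, Complex.ofReal_re, ← Complex.sq_norm]
  rw [← hTval]
  exact hmono

end
end

section
/- Let U(x,y) be the matrix kernel of the orthogonal projection onto the span of an orthonormal system of H^1 vector-functions φ_1, …, φ_N in L^2(ℝ, ℂ^M). Then for every x ∈ ℝ, Tr[U(x,x)^3] ≤ ∫_ℝ Tr[(∂_y U(x,y)) (∂_y U(y,x))] dy. -/
open MeasureTheory

open Matrix


lemma integrable_mul_of_memL2 {f g : ℝ → ℂ} (hf : MemLp f 2 (volume : Measure ℝ))
    (hg : MemLp g 2 (volume : Measure ℝ)) : Integrable (fun y => f y * g y) := by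
  have hfi : Integrable (fun y => ‖f y‖ ^ 2) := by
    simpa using hf.norm.integrable_sq
  have hgi : Integrable (fun y => ‖g y‖ ^ 2) := by
    simpa using hg.norm.integrable_sq
  refine Integrable.mono ((hfi.add hgi).div_const 2) (hf.1.mul hg.1) ?_
  filter_upwards with y
  simp only [norm_mul, Pi.add_apply, Real.norm_eq_abs]
  rw [abs_div, abs_of_nonneg (by positivity), abs_of_nonneg (by norm_num : (0:ℝ) ≤ 2)]
  nlinarith [norm_nonneg (f y), norm_nonneg (g y), sq_nonneg (‖f y‖ - ‖g y‖)]

private lemma le_of_eps {a b : ℝ} (h : ∀ ε > 0, a ≤ b + ε) : a ≤ b := by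
  by_contra hc; push_neg at hc
  have := h ((a - b) / 2) (by linarith); linarith

lemma exists_small_in_Iic (f : ℝ → ℝ) (hi : Integrable f) (x : ℝ) {ε : ℝ} (hε : 0 < ε) :
    ∃ y ≤ x, f y < ε := by
  by_contra hc
  push_neg at hc
  have hsub : Set.Iic x ⊆ {y | ε ≤ f y} := fun y hy => hc y hy
  have h1 : (volume : Measure ℝ) (Set.Iic x) < ⊤ :=
    lt_of_le_of_lt (measure_mono hsub) (hi.measure_ge_lt_top hε)
  simp [Real.volume_Iic] at h1

lemma exists_small_in_Ici (f : ℝ → ℝ) (hi : Integrable f) (x : ℝ) {ε : ℝ} (hε : 0 < ε) :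
    ∃ y ≥ x, f y < ε := by
  by_contra hc
  push_neg at hc
  have hsub : Set.Ici x ⊆ {y | ε ≤ f y} := fun y hy => hc y hy
  have h1 : (volume : Measure ℝ) (Set.Ici x) < ⊤ :=
    lt_of_le_of_lt (measure_mono hsub) (hi.measure_ge_lt_top hε)
  simp [Real.volume_Ici] at h1

lemma two_mul_le_integral_abs_deriv (f : ℝ → ℝ) (hf : Differentiable ℝ f)
    (hi : Integrable f) (hi' : Integrable (deriv f)) (x : ℝ) :
    2 * f x ≤ ∫ y, |deriv f y| := by
  have habs : Integrable (fun y => |deriv f y|) := hi'.abs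
  have key1 : f x ≤ ∫ y in Set.Iic x, |deriv f y| := by
    refine le_of_eps fun ε hε => ?_
    obtain ⟨y, hyx, hy⟩ := exists_small_in_Iic f hi x hε
    have hftc : ∫ t in y..x, deriv f t = f x - f y :=
      intervalIntegral.integral_deriv_eq_sub (fun t _ => hf t) hi'.intervalIntegrable
    have h1 : f x - f y ≤ ∫ t in y..x, |deriv f t| := by
      rw [← hftc]
      exact le_trans (le_abs_self _) (intervalIntegral.abs_integral_le_integral_abs hyx)
    have h2 : ∫ t in y..x, |deriv f t| ≤ ∫ t in Set.Iic x, |deriv f t| := by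
      rw [intervalIntegral.integral_of_le hyx]
      apply setIntegral_mono_set habs.integrableOn
      · filter_upwards with t using abs_nonneg _
      · filter_upwards with t ht
        exact ht.2
    linarith
  have key2 : f x ≤ ∫ y in Set.Ici x, |deriv f y| := by
    refine le_of_eps fun ε hε => ?_
    obtain ⟨y, hyx, hy⟩ := exists_small_in_Ici f hi x hε
    have hftc : ∫ t in x..y, deriv f t = f y - f x :=
      intervalIntegral.integral_deriv_eq_sub (fun t _ => hf t) hi'.intervalIntegrable
    have h1 : f x - f y ≤ ∫ t in x..y, |deriv f t| := by
      have h := intervalIntegral.abs_integral_le_integral_abs (f := deriv f) (μ := volume) hyx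
      rw [hftc] at h
      calc f x - f y ≤ |f y - f x| := by rw [abs_sub_comm]; exact le_abs_self _
        _ ≤ _ := h
    have h2 : ∫ t in x..y, |deriv f t| ≤ ∫ t in Set.Ici x, |deriv f t| := by
      rw [intervalIntegral.integral_of_le hyx]
      apply setIntegral_mono_set habs.integrableOn
      · filter_upwards with t using abs_nonneg _
      · filter_upwards with t ht
        exact le_of_lt ht.1
    linarith
  have hIci : (∫ y in Set.Ici x, |deriv f y|) = ∫ y in Set.Ioi x, |deriv f y| :=
    (setIntegral_congr_set Ioi_ae_eq_Ici).symm
  have hsplit : (∫ y in Set.Iic x, |deriv f y|) + ∫ y in Set.Ioi x, |deriv f y|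
      = ∫ y, |deriv f y| :=
    intervalIntegral.integral_Iic_add_Ioi habs.integrableOn habs.integrableOn
  linarith [key1, key2]

private lemma abs_bound_key (t0 : ℝ) (ht : 0 < t0) (u v : ℝ) :
    2 * (u * v) ≤ t0 * (u * u) + t0⁻¹ * (v * v) := by
  have hs : t0 * t0⁻¹ = 1 := mul_inv_cancel₀ ht.ne'
  nlinarith [mul_nonneg (le_of_lt (inv_pos.2 ht)) (sq_nonneg (t0 * u - v)), ht, inv_pos.2 ht]

private lemma abs_bound_aux (t0 a b c d : ℝ) (ht : 0 < t0) :
    |2 * (a * c + b * d)| ≤ t0 * (a * a + b * b) + t0⁻¹ * (c * c + d * d) := by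
  rw [abs_le]
  have h1 := abs_bound_key t0 ht a c
  have h2 := abs_bound_key t0 ht (-a) c
  have h3 := abs_bound_key t0 ht b d
  have h4 := abs_bound_key t0 ht (-b) d
  constructor <;> nlinarith

lemma sobolev_pointwise (M : ℕ) (w : Fin M → ℝ → ℂ) (hw : ∀ k, Differentiable ℝ (w k))
    (hw2 : ∀ k, MemLp (w k) 2 (volume : Measure ℝ))
    (hw2' : ∀ k, MemLp (deriv (w k)) 2 (volume : Measure ℝ))
    (hone : (∫ y, ∑ k, Complex.normSq (w k y)) ≤ 1) (x : ℝ) :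
    (∑ k, Complex.normSq (w k x))^2 ≤ ∫ y, ∑ k, Complex.normSq (deriv (w k) y) := by
  classical
  set ρ : ℝ → ℝ := fun y => ∑ k, Complex.normSq (w k y) with hρdef
  set σ : ℝ → ℝ := fun y => ∑ k, Complex.normSq (deriv (w k) y) with hσdef
  -- derivative of ρ
  have hd : ∀ y : ℝ, HasDerivAt ρ
      (∑ k, 2 * ((w k y).re * (deriv (w k) y).re + (w k y).im * (deriv (w k) y).im)) y := by
    intro y
    have : ∀ k : Fin M, HasDerivAt (fun s => Complex.normSq (w k s))
        (2 * ((w k y).re * (deriv (w k) y).re + (w k y).im * (deriv (w k) y).im)) y := by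
      intro k
      have hwk : HasDerivAt (w k) (deriv (w k) y) y := (hw k y).hasDerivAt
      have ha : HasDerivAt (fun s => (w k s).re) ((deriv (w k) y).re) y :=
        (Complex.reCLM.hasFDerivAt.comp_hasDerivAt y hwk)
      have hb : HasDerivAt (fun s => (w k s).im) ((deriv (w k) y).im) y :=
        (Complex.imCLM.hasFDerivAt.comp_hasDerivAt y hwk)
      have := ((ha.fun_mul ha).fun_add (hb.fun_mul hb))
      have heq : (fun s => Complex.normSq (w k s)) =
          fun s => (w k s).re * (w k s).re + (w k s).im * (w k s).im := by
        funext s; rw [Complex.normSq_apply]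
      rw [heq]
      exact this.congr_deriv (by ring)
    simpa using HasDerivAt.fun_sum (fun k _ => this k)
  have hρdiff : Differentiable ℝ ρ := fun y => (hd y).differentiableAt
  have hderiv_eq : ∀ y, deriv ρ y =
      ∑ k, 2 * ((w k y).re * (deriv (w k) y).re + (w k y).im * (deriv (w k) y).im) :=
    fun y => (hd y).deriv
  -- integrability
  have hρint : Integrable ρ := by
    apply integrable_finset_sum
    intro k _
    have := (hw2 k).norm.integrable_sq
    refine this.congr ?_
    filter_upwards with y
    rw [← Complex.sq_norm]
  have hσint : Integrable σ := by
    apply integrable_finset_sum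
    intro k _
    have := (hw2' k).norm.integrable_sq
    refine this.congr ?_
    filter_upwards with y
    rw [← Complex.sq_norm]
  have hρ0 : ∀ y, 0 ≤ ρ y := fun y => Finset.sum_nonneg fun k _ => Complex.normSq_nonneg _
  have hσ0 : ∀ y, 0 ≤ σ y := fun y => Finset.sum_nonneg fun k _ => Complex.normSq_nonneg _
  -- pointwise bound on |deriv ρ|
  have hbound : ∀ t0 : ℝ, 0 < t0 → ∀ y, |deriv ρ y| ≤ t0 * ρ y + t0⁻¹ * σ y := by
    intro t0 ht y
    rw [hderiv_eq]
    calc |∑ k, 2 * ((w k y).re * (deriv (w k) y).re + (w k y).im * (deriv (w k) y).im)|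
        ≤ ∑ k, |2 * ((w k y).re * (deriv (w k) y).re + (w k y).im * (deriv (w k) y).im)| :=
          Finset.abs_sum_le_sum_abs _ _
      _ ≤ ∑ k, (t0 * Complex.normSq (w k y) + t0⁻¹ * Complex.normSq (deriv (w k) y)) := by
          apply Finset.sum_le_sum
          intro k _
          have := abs_bound_aux t0 (w k y).re (w k y).im (deriv (w k) y).re (deriv (w k) y).im ht
          simpa [Complex.normSq_apply] using this
      _ = t0 * ρ y + t0⁻¹ * σ y := by
          rw [Finset.sum_add_distrib, ← Finset.mul_sum, ← Finset.mul_sum]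
  have hderiv_int : Integrable (deriv ρ) := by
    refine Integrable.mono (hρint.add hσint) ((measurable_deriv ρ).aestronglyMeasurable) ?_
    filter_upwards with y
    have h := hbound 1 one_pos y
    simp only [one_mul, inv_one] at h
    have hnn : (0:ℝ) ≤ ρ y + σ y := add_nonneg (hρ0 y) (hσ0 y)
    simpa [Real.norm_eq_abs, Pi.add_apply, abs_of_nonneg hnn] using h
  -- main estimate
  have hmain : ∀ t0 : ℝ, 0 < t0 → 2 * ρ x ≤ t0 + t0⁻¹ * ∫ y, σ y := by
    intro t0 ht
    have h1 : 2 * ρ x ≤ ∫ y, |deriv ρ y| :=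
      two_mul_le_integral_abs_deriv ρ hρdiff hρint hderiv_int x
    have h2 : (∫ y, |deriv ρ y|) ≤ ∫ y, (t0 * ρ y + t0⁻¹ * σ y) := by
      apply integral_mono hderiv_int.abs ((hρint.const_mul t0).add (hσint.const_mul t0⁻¹))
      intro y
      exact hbound t0 ht y
    have h3 : (∫ y, (t0 * ρ y + t0⁻¹ * σ y)) = t0 * (∫ y, ρ y) + t0⁻¹ * ∫ y, σ y := by
      rw [integral_add (hρint.const_mul t0) (hσint.const_mul t0⁻¹),
        integral_const_mul, integral_const_mul]
    have h4 : t0 * (∫ y, ρ y) ≤ t0 := by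
      have := mul_le_mul_of_nonneg_left hone (le_of_lt ht)
      simpa using this
    linarith
  have hE0 : 0 ≤ ∫ y, σ y := integral_nonneg hσ0
  set E : ℝ := ∫ y, σ y with hE
  rcases eq_or_lt_of_le hE0 with hE0' | hEpos
  · -- E = 0
    have hx0 : ρ x ≤ 0 := by
      by_contra hc
      push_neg at hc
      have := hmain (ρ x) hc
      rw [← hE0'] at this
      simp at this
      linarith
    have : ρ x = 0 := le_antisymm hx0 (hρ0 x)
    rw [show (∑ k, Complex.normSq (w k x)) = ρ x from rfl, this]
    simpa using hE0
  · -- E > 0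
    have hs : 0 < Real.sqrt E := Real.sqrt_pos.2 hEpos
    have := hmain (Real.sqrt E) hs
    have hsq : (Real.sqrt E)⁻¹ * E = Real.sqrt E := by
      rw [inv_mul_eq_div, Real.div_sqrt]
    rw [hsq] at this
    have hρx : ρ x ≤ Real.sqrt E := by linarith
    have : (ρ x)^2 ≤ (Real.sqrt E)^2 := by
      apply pow_le_pow_left₀ (hρ0 x) hρx
    rwa [Real.sq_sqrt (le_of_lt hEpos)] at this

lemma trace_cube_le_trace_mul {N : ℕ} (G K : Matrix (Fin N) (Fin N) ℂ)
    (hG : G.IsHermitian)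
    (hGpos : ∀ ξ : Fin N → ℂ, 0 ≤ (dotProduct (star ξ) (G *ᵥ ξ)).re)
    (hkey : ∀ ξ : Fin N → ℂ, (∑ n, Complex.normSq (ξ n)) = 1 →
      ((dotProduct (star ξ) (G *ᵥ ξ)).re)^2 ≤
        (dotProduct (star ξ) (K *ᵥ ξ)).re) :
    (Matrix.trace (G^3)).re ≤ (Matrix.trace (K*G)).re := by
  classical
  set V : Matrix (Fin N) (Fin N) ℂ := (hG.eigenvectorUnitary : Matrix (Fin N) (Fin N) ℂ) with hV
  set W : Matrix (Fin N) (Fin N) ℂ := star V with hW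
  set lam : Fin N → ℝ := hG.eigenvalues with hlam
  set D : Matrix (Fin N) (Fin N) ℂ := Matrix.diagonal (fun i => (lam i : ℂ)) with hD
  have hWV : W * V = 1 := Matrix.mem_unitaryGroup_iff'.mp hG.eigenvectorUnitary.2
  have hspec : G = V * D * W := by
    have := hG.spectral_theorem
    rw [Unitary.conjStarAlgAut_apply] at this
    exact this
  -- columns of V are unit eigenvectors
  set v : Fin N → Fin N → ℂ := fun i => ⇑(hG.eigenvectorBasis i) with hv
  have hvnorm : ∀ i, (∑ a, Complex.normSq (v i a)) = 1 := by
    intro i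
    have h1 : ‖hG.eigenvectorBasis i‖ = 1 := hG.eigenvectorBasis.orthonormal.1 i
    have h2 : ‖hG.eigenvectorBasis i‖ = Real.sqrt (∑ a, ‖hG.eigenvectorBasis i a‖ ^ 2) :=
      EuclideanSpace.norm_eq _
    have h3 : Real.sqrt (∑ a, ‖hG.eigenvectorBasis i a‖ ^ 2) = 1 := by rw [← h2, h1]
    have h4 : (∑ a, ‖hG.eigenvectorBasis i a‖ ^ 2) = 1 := by
      have hnn : (0:ℝ) ≤ ∑ a, ‖hG.eigenvectorBasis i a‖ ^ 2 :=
        Finset.sum_nonneg fun a _ => sq_nonneg _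
      nlinarith [Real.sq_sqrt hnn]
    rw [← h4]
    apply Finset.sum_congr rfl
    intro a _
    rw [← Complex.sq_norm]
  have hlam_eq : ∀ i, lam i = (dotProduct (star (v i)) (G *ᵥ (v i))).re := by
    intro i
    exact hG.eigenvalues_eq i
  have hlam_nonneg : ∀ i, 0 ≤ lam i := fun i => (hlam_eq i) ▸ hGpos (v i)
  have hlam_sq : ∀ i, (lam i)^2 ≤ (dotProduct (star (v i)) (K *ᵥ (v i))).re := by
    intro i
    have := hkey (v i) (hvnorm i)
    rwa [← hlam_eq i] at this
  -- trace of G^3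
  have hmid : ∀ A B : Matrix (Fin N) (Fin N) ℂ, (V*A*W)*(V*B*W) = V*(A*B)*W := by
    intro A B
    calc (V*A*W)*(V*B*W) = V*(A*(W*(V*(B*W)))) := by simp only [Matrix.mul_assoc]
      _ = V*(A*(B*W)) := by rw [← Matrix.mul_assoc W V, hWV, Matrix.one_mul]
      _ = V*(A*B)*W := by simp only [Matrix.mul_assoc]
  have hG3 : G^3 = V*(D*D*D)*W := by
    rw [hspec, pow_succ, pow_two, hmid, hmid]
  have htraceVW : ∀ C : Matrix (Fin N) (Fin N) ℂ, Matrix.trace (V*C*W) = Matrix.trace C := by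
    intro C
    rw [Matrix.trace_mul_cycle, hWV, Matrix.one_mul]
  have htrG3 : (Matrix.trace (G^3)).re = ∑ i, (lam i)^3 := by
    rw [hG3, htraceVW]
    rw [hD]
    rw [Matrix.diagonal_mul_diagonal, Matrix.diagonal_mul_diagonal, Matrix.trace_diagonal]
    rw [Complex.re_sum]
    apply Finset.sum_congr rfl
    intro i _
    rw [show ((lam i : ℂ)) * (lam i) * (lam i) = ((lam i ^ 3 : ℝ) : ℂ) by push_cast; ring,
      Complex.ofReal_re]
  -- trace of K*G
  have htrKG : Matrix.trace (K*G) = ∑ i, (W*K*V) i i * (lam i : ℂ) := by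
    rw [hspec, show K*(V*D*W) = K*(V*D)*W from by simp only [Matrix.mul_assoc],
      Matrix.trace_mul_cycle]
    rw [show W*K*(V*D) = (W*K*V)*D from by simp only [Matrix.mul_assoc]]
    rw [Matrix.trace]
    apply Finset.sum_congr rfl
    intro i _
    rw [Matrix.diag_apply, Matrix.mul_diagonal]
  have hcol : ∀ i a, V a i = v i a := fun i a => rfl
  have hdiag : ∀ i, (W*K*V) i i = dotProduct (star (v i)) (K *ᵥ (v i)) := by
    intro i
    rw [show W*K*V = W*(K*V) from by rw [Matrix.mul_assoc]]
    rw [Matrix.mul_apply, dotProduct]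
    apply Finset.sum_congr rfl
    intro a _
    rw [Matrix.mul_apply]
    have h1 : W i a = (star (v i)) a := by
      rw [hW, Matrix.star_apply]
      rfl
    have h2 : (K*V) a i = (K *ᵥ (v i)) a := by
      rw [Matrix.mul_apply]
      rfl
    rw [h1, ← h2, Matrix.mul_apply]
  -- final assembly
  rw [htrG3, htrKG, Complex.re_sum]
  apply Finset.sum_le_sum
  intro i _
  have h1 : ((W*K*V) i i * (lam i : ℂ)).re = ((W*K*V) i i).re * lam i := by
    rw [Complex.mul_re, Complex.ofReal_re, Complex.ofReal_im, mul_zero, sub_zero]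
  rw [h1, hdiag]
  calc lam i ^ 3 = lam i ^ 2 * lam i := by ring
    _ ≤ (dotProduct (star (v i)) (K *ᵥ (v i))).re * lam i :=
        mul_le_mul_of_nonneg_right (hlam_sq i) (hlam_nonneg i)

lemma memL2_conj {f : ℝ → ℂ} (hf : MemLp f 2 (volume : Measure ℝ)) :
    MemLp (fun y => (starRingEnd ℂ) (f y)) 2 (volume : Measure ℝ) := by
  refine MemLp.of_le hf (continuous_star.comp_aestronglyMeasurable hf.1) ?_
  filter_upwards with y
  exact le_of_eq (RCLike.norm_conj _)

lemma trace_pow_three_comm {a b : Type*} [Fintype a] [Fintype b] [DecidableEq a] [DecidableEq b]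
    (A : Matrix a b ℂ) (B : Matrix b a ℂ) :
    Matrix.trace ((A*B)^3) = Matrix.trace ((B*A)^3) := by
  have h : (A*B)^3 = A*(((B*A)^2)*B) := by
    simp only [pow_succ, pow_zero, one_mul, Matrix.mul_assoc]
  rw [h, Matrix.trace_mul_comm]
  rw [show ((B*A)^2*B)*A = (B*A)^2*(B*A) from by rw [Matrix.mul_assoc], ← pow_succ]

lemma gram_qf {N M : ℕ} (ξ : Fin N → ℂ) (f : Fin N → Fin M → ℂ) :
    ∑ n, (starRingEnd ℂ) (ξ n) * (∑ m, (∑ k, (starRingEnd ℂ) (f n k) * f m k) * ξ m)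
      = ∑ k, (Complex.normSq (∑ n, ξ n * f n k) : ℂ) := by
  have hR : ∀ k : Fin M, (Complex.normSq (∑ n, ξ n * f n k) : ℂ)
      = ∑ n, ∑ m, (starRingEnd ℂ) (ξ n) * ((starRingEnd ℂ) (f n k) * f m k * ξ m) := by
    intro k
    rw [Complex.normSq_eq_conj_mul_self, map_sum, Finset.sum_mul]
    refine Finset.sum_congr rfl fun n _ => ?_
    rw [_root_.map_mul, Finset.mul_sum]
    refine Finset.sum_congr rfl fun m _ => ?_
    ring
  rw [Finset.sum_congr rfl fun k _ => hR k, Finset.sum_comm]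
  refine Finset.sum_congr rfl fun n _ => ?_
  rw [Finset.mul_sum]
  have hL : ∀ m, (starRingEnd ℂ) (ξ n) * ((∑ k, (starRingEnd ℂ) (f n k) * f m k) * ξ m)
      = ∑ k, (starRingEnd ℂ) (ξ n) * ((starRingEnd ℂ) (f n k) * f m k * ξ m) := by
    intro m
    rw [Finset.sum_mul, Finset.mul_sum]
  rw [Finset.sum_congr rfl fun m _ => hL m]
  exact Finset.sum_comm

lemma qf_integral {N M : ℕ} (ξ : Fin N → ℂ) (g : Fin N → ℝ → Fin M → ℂ)
    (hg : ∀ n k, MemLp (fun y => g n y k) 2 (volume : Measure ℝ)) :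
    ∑ n, (starRingEnd ℂ) (ξ n) *
        (∑ m, (∑ k, ∫ y : ℝ, (starRingEnd ℂ) (g n y k) * g m y k) * ξ m)
      = ((∫ y : ℝ, ∑ k, Complex.normSq (∑ n, ξ n * g n y k) : ℝ) : ℂ) := by
  have hint : ∀ n m k, Integrable (fun y => (starRingEnd ℂ) (g n y k) * g m y k) :=
    fun n m k => integrable_mul_of_memL2 (memL2_conj (hg n k)) (hg m k)
  have hint2 : ∀ n m k, Integrable
      (fun y => (starRingEnd ℂ) (ξ n) * ((starRingEnd ℂ) (g n y k) * g m y k * ξ m)) :=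
    fun n m k => ((hint n m k).mul_const (ξ m)).const_mul _
  have h1 : ∑ n, (starRingEnd ℂ) (ξ n) *
        (∑ m, (∑ k, ∫ y : ℝ, (starRingEnd ℂ) (g n y k) * g m y k) * ξ m)
      = ∑ n, ∑ m, ∑ k, ∫ y : ℝ,
          (starRingEnd ℂ) (ξ n) * ((starRingEnd ℂ) (g n y k) * g m y k * ξ m) := by
    refine Finset.sum_congr rfl fun n _ => ?_
    rw [Finset.mul_sum]
    refine Finset.sum_congr rfl fun m _ => ?_
    rw [Finset.sum_mul, Finset.mul_sum]
    refine Finset.sum_congr rfl fun k _ => ?_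
    rw [← integral_mul_const, ← integral_const_mul]
  have h2 : (∑ n, ∑ m, ∑ k, ∫ y : ℝ,
        (starRingEnd ℂ) (ξ n) * ((starRingEnd ℂ) (g n y k) * g m y k * ξ m))
      = ∫ y : ℝ, ∑ n, ∑ m, ∑ k,
          (starRingEnd ℂ) (ξ n) * ((starRingEnd ℂ) (g n y k) * g m y k * ξ m) := by
    rw [integral_finset_sum _ (fun n _ => integrable_finset_sum _
      (fun m _ => integrable_finset_sum _ (fun k _ => hint2 n m k)))]
    refine Finset.sum_congr rfl fun n _ => ?_
    rw [integral_finset_sum _ (fun m _ => integrable_finset_sum _ (fun k _ => hint2 n m k))]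
    refine Finset.sum_congr rfl fun m _ => ?_
    rw [integral_finset_sum _ (fun k _ => hint2 n m k)]
  have h3 : ∀ y : ℝ, (∑ n, ∑ m, ∑ k,
        (starRingEnd ℂ) (ξ n) * ((starRingEnd ℂ) (g n y k) * g m y k * ξ m))
      = ∑ k, (Complex.normSq (∑ n, ξ n * g n y k) : ℂ) := by
    intro y
    rw [← gram_qf ξ (fun n k => g n y k)]
    refine Finset.sum_congr rfl fun n _ => ?_
    rw [Finset.mul_sum]
    refine Finset.sum_congr rfl fun m _ => ?_
    rw [Finset.sum_mul, Finset.mul_sum]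
  rw [h1, h2]
  rw [show (fun y : ℝ => ∑ n, ∑ m, ∑ k,
        (starRingEnd ℂ) (ξ n) * ((starRingEnd ℂ) (g n y k) * g m y k * ξ m))
      = fun y : ℝ => ((∑ k, Complex.normSq (∑ n, ξ n * g n y k) : ℝ) : ℂ) from
    funext fun y => by rw [h3 y]; push_cast; ring]
  exact integral_ofReal


/-- Pointwise bound from the proof of the matrix Sobolev inequality: for the
projection kernel `U` of an orthonormal system of `H¹` vector-functions,
for every `x`, `Tr[U(x,x)³] ≤ ∫ Tr[(∂_y U(x,y))(∂_y U(y,x))] dy`. -/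
theorem trace_cube_le_integral_deriv (N M : ℕ) (φ : Fin N → ℝ → Fin M → ℂ)
    (hdiff : ∀ n j, Differentiable ℝ (fun x => φ n x j))
    (hL2 : ∀ n j, MemLp (fun x => φ n x j) 2 (volume : Measure ℝ))
    (hL2' : ∀ n j, MemLp (deriv (fun x => φ n x j)) 2 (volume : Measure ℝ))
    (hortho : ∀ n m, ∑ j, ∫ x : ℝ, φ n x j * (starRingEnd ℂ) (φ m x j) =
      if n = m then 1 else 0)
    (U : ℝ → ℝ → Matrix (Fin M) (Fin M) ℂ)
    (hU : ∀ x y j k, U x y j k = ∑ n, φ n x j * (starRingEnd ℂ) (φ n y k))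
    (x : ℝ) :
    (Matrix.trace (U x x ^ 3)).re ≤
      ∫ y : ℝ, (Matrix.trace
        ((Matrix.of fun j k => deriv (fun t => U x t j k) y) *
         (Matrix.of fun j k => deriv (fun t => U t x j k) y))).re := by
  classical
  set P : Matrix (Fin N) (Fin M) ℂ := Matrix.of (fun n k => (starRingEnd ℂ) (φ n x k)) with hPdef
  set Q : ℝ → Matrix (Fin N) (Fin M) ℂ :=
    fun y => Matrix.of (fun n k => (starRingEnd ℂ) (deriv (fun t => φ n t k) y)) with hQdef
  set G : Matrix (Fin N) (Fin N) ℂ := P * Pᴴ with hGdef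
  set Kmat : Matrix (Fin N) (Fin N) ℂ :=
    Matrix.of (fun n m => ∑ k, ∫ y : ℝ, (starRingEnd ℂ) (deriv (fun t => φ n t k) y) *
      deriv (fun t => φ m t k) y) with hKdef
  have hGentry : ∀ n m, G n m = ∑ k, (starRingEnd ℂ) (φ n x k) * φ m x k := by
    intro n m
    rw [hGdef, Matrix.mul_apply]
    refine Finset.sum_congr rfl fun k _ => ?_
    rw [Matrix.conjTranspose_apply, hPdef]
    simp
  have hint : ∀ (n m : Fin N) (k : Fin M), Integrable
      (fun y => (starRingEnd ℂ) (deriv (fun t => φ n t k) y) * deriv (fun t => φ m t k) y) :=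
    fun n m k => integrable_mul_of_memL2 (memL2_conj (hL2' n k)) (hL2' m k)
  -- LHS
  have hUxx : U x x = Pᴴ * P := by
    ext j k
    rw [hU x x j k, Matrix.mul_apply]
    refine Finset.sum_congr rfl fun n _ => ?_
    rw [Matrix.conjTranspose_apply, hPdef]
    simp
  have hLHS : (Matrix.trace (U x x ^ 3)).re = (Matrix.trace (G ^ 3)).re := by
    rw [hUxx, trace_pow_three_comm, ← hGdef]
  -- derivative identities
  have hD1 : ∀ y : ℝ, (Matrix.of fun j k => deriv (fun t => U x t j k) y) = Pᴴ * Q y := by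
    intro y
    ext j k
    have h1 : HasDerivAt (fun t => U x t j k)
        (∑ n, φ n x j * (starRingEnd ℂ) (deriv (fun t => φ n t k) y)) y := by
      have heq : (fun t => U x t j k) = fun t => ∑ n, φ n x j * (starRingEnd ℂ) (φ n t k) := by
        funext t; exact hU x t j k
      rw [heq]
      refine HasDerivAt.fun_sum fun n _ => ?_
      have hstar : HasDerivAt (fun t => (starRingEnd ℂ) (φ n t k))
          ((starRingEnd ℂ) (deriv (fun t => φ n t k) y)) y :=
        ((hdiff n k y).hasDerivAt).star
      exact hstar.const_mul (φ n x j)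
    rw [Matrix.of_apply, h1.deriv, Matrix.mul_apply]
    refine Finset.sum_congr rfl fun n _ => ?_
    rw [Matrix.conjTranspose_apply, hPdef, hQdef]
    simp
  have hD2 : ∀ y : ℝ, (Matrix.of fun j k => deriv (fun t => U t x j k) y) = (Q y)ᴴ * P := by
    intro y
    ext j k
    have h1 : HasDerivAt (fun t => U t x j k)
        (∑ n, deriv (fun t => φ n t j) y * (starRingEnd ℂ) (φ n x k)) y := by
      have heq : (fun t => U t x j k) = fun t => ∑ n, φ n t j * (starRingEnd ℂ) (φ n x k) := by
        funext t; exact hU t x j k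
      rw [heq]
      exact HasDerivAt.fun_sum fun n _ => ((hdiff n j y).hasDerivAt).mul_const _
    rw [Matrix.of_apply, h1.deriv, Matrix.mul_apply]
    refine Finset.sum_congr rfl fun n _ => ?_
    rw [Matrix.conjTranspose_apply, hPdef, hQdef]
    simp
  -- trace identity pointwise in y
  have htr_y : ∀ y : ℝ, (Matrix.trace ((Pᴴ * Q y) * ((Q y)ᴴ * P)))
      = ∑ n, ∑ m, ∑ k, (starRingEnd ℂ) (deriv (fun t => φ n t k) y) *
          deriv (fun t => φ m t k) y * G m n := by
    intro y
    rw [show (Pᴴ * Q y) * ((Q y)ᴴ * P) = Pᴴ * (Q y * (Q y)ᴴ * P) from by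
        simp only [Matrix.mul_assoc],
      Matrix.trace_mul_comm,
      show (Q y * (Q y)ᴴ * P) * Pᴴ = (Q y * (Q y)ᴴ) * (P * Pᴴ) from by
        simp only [Matrix.mul_assoc], ← hGdef]
    rw [Matrix.trace]
    refine Finset.sum_congr rfl fun n _ => ?_
    rw [Matrix.diag_apply, Matrix.mul_apply]
    refine Finset.sum_congr rfl fun m _ => ?_
    rw [Matrix.mul_apply, Finset.sum_mul]
    refine Finset.sum_congr rfl fun k _ => ?_
    rw [Matrix.conjTranspose_apply, hQdef]
    simp [mul_comm, mul_left_comm, mul_assoc]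
  -- RHS integral identity
  have hRHSint : (∫ y : ℝ, (Matrix.trace
        ((Matrix.of fun j k => deriv (fun t => U x t j k) y) *
         (Matrix.of fun j k => deriv (fun t => U t x j k) y))).re)
      = (Matrix.trace (Kmat * G)).re := by
    have heq : (fun y : ℝ => (Matrix.trace
        ((Matrix.of fun j k => deriv (fun t => U x t j k) y) *
         (Matrix.of fun j k => deriv (fun t => U t x j k) y))).re)
        = fun y : ℝ => ∑ n, ∑ m, ∑ k,
            ((starRingEnd ℂ) (deriv (fun t => φ n t k) y) *
              deriv (fun t => φ m t k) y * G m n).re := by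
      funext y
      rw [hD1 y, hD2 y, htr_y y, Complex.re_sum]
      refine Finset.sum_congr rfl fun n _ => ?_
      rw [Complex.re_sum]
      refine Finset.sum_congr rfl fun m _ => ?_
      rw [Complex.re_sum]
    rw [heq]
    have hint3 : ∀ (n m : Fin N) (k : Fin M), Integrable (fun y =>
        ((starRingEnd ℂ) (deriv (fun t => φ n t k) y) *
          deriv (fun t => φ m t k) y * G m n).re) :=
      fun n m k => ((hint n m k).mul_const (G m n)).re
    rw [integral_finset_sum _ (fun n _ => integrable_finset_sum _
      (fun m _ => integrable_finset_sum _ (fun k _ => hint3 n m k)))]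
    rw [Matrix.trace, Complex.re_sum]
    refine Finset.sum_congr rfl fun n _ => ?_
    rw [integral_finset_sum _ (fun m _ => integrable_finset_sum _ (fun k _ => hint3 n m k))]
    rw [Matrix.diag_apply, Matrix.mul_apply, Complex.re_sum]
    refine Finset.sum_congr rfl fun m _ => ?_
    rw [integral_finset_sum _ (fun k _ => hint3 n m k)]
    rw [hKdef]
    rw [Matrix.of_apply, Finset.sum_mul, Complex.re_sum]
    refine Finset.sum_congr rfl fun k _ => ?_
    have h5 := integral_re (μ := (volume : Measure ℝ)) ((hint n m k).mul_const (G m n))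
    rw [← integral_mul_const]
    exact h5
  -- quadratic forms
  have hQFG : ∀ ξ : Fin N → ℂ, dotProduct (star ξ) (G *ᵥ ξ)
      = ∑ k, (Complex.normSq (∑ n, ξ n * φ n x k) : ℂ) := by
    intro ξ
    rw [← gram_qf ξ (fun n k => φ n x k), dotProduct]
    refine Finset.sum_congr rfl fun n _ => ?_
    congr 1
    rw [show (G *ᵥ ξ) n = ∑ m, G n m * ξ m from rfl]
    refine Finset.sum_congr rfl fun m _ => ?_
    rw [hGentry n m]
  have hQFK : ∀ ξ : Fin N → ℂ, dotProduct (star ξ) (Kmat *ᵥ ξ)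
      = ((∫ y : ℝ, ∑ k, Complex.normSq (∑ n, ξ n * deriv (fun t => φ n t k) y) : ℝ) : ℂ) := by
    intro ξ
    rw [← qf_integral ξ (fun n y k => deriv (fun t => φ n t k) y) (fun n k => hL2' n k),
      dotProduct]
    refine Finset.sum_congr rfl fun n _ => rfl
  -- orthonormality
  have horth2 : ∀ n m, (∑ k, ∫ y : ℝ, (starRingEnd ℂ) (φ n y k) * φ m y k)
      = if n = m then (1:ℂ) else 0 := by
    intro n m
    have h1 : (∑ k, ∫ y : ℝ, (starRingEnd ℂ) (φ n y k) * φ m y k)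
        = (starRingEnd ℂ) (∑ k, ∫ y : ℝ, φ n y k * (starRingEnd ℂ) (φ m y k)) := by
      rw [map_sum]
      refine Finset.sum_congr rfl fun k _ => ?_
      rw [← integral_conj]
      refine integral_congr_ae (Filter.Eventually.of_forall fun y => ?_)
      simp [_root_.map_mul, Complex.conj_conj, mul_comm]
    rw [h1, hortho n m]
    split <;> simp
  have hone_c : ∀ ξ : Fin N → ℂ, (∑ n, Complex.normSq (ξ n)) = 1 →
      (∫ y : ℝ, ∑ k, Complex.normSq (∑ n, ξ n * φ n y k)) = 1 := by
    intro ξ hξ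
    have h := qf_integral ξ (fun n y k => φ n y k) (fun n k => hL2 n k)
    have h2 : ∑ n, (starRingEnd ℂ) (ξ n) *
        (∑ m, (∑ k, ∫ y : ℝ, (starRingEnd ℂ) (φ n y k) * φ m y k) * ξ m) = 1 := by
      have h3 : ∀ n : Fin N, (∑ m, (∑ k, ∫ y : ℝ, (starRingEnd ℂ) (φ n y k) * φ m y k) * ξ m)
          = ξ n := by
        intro n
        rw [Finset.sum_congr rfl fun m _ => by rw [horth2 n m]]
        simp
      rw [Finset.sum_congr rfl fun n _ => by rw [h3 n]]
      have h4 : ∀ n : Fin N, (starRingEnd ℂ) (ξ n) * ξ n = (Complex.normSq (ξ n) : ℂ) :=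
        fun n => (Complex.normSq_eq_conj_mul_self).symm
      rw [Finset.sum_congr rfl fun n _ => h4 n]
      rw [show (∑ n, (Complex.normSq (ξ n) : ℂ)) = ((∑ n, Complex.normSq (ξ n) : ℝ) : ℂ) from by
        push_cast; rfl]
      rw [hξ]
      norm_num
    rw [h2] at h
    exact_mod_cast h.symm
  -- hypotheses for matrix lemma
  have hherm : G.IsHermitian := isHermitian_mul_conjTranspose_self P
  have hGpos : ∀ ξ : Fin N → ℂ, 0 ≤ (dotProduct (star ξ) (G *ᵥ ξ)).re := by
    intro ξ
    rw [hQFG ξ, show (∑ k, (Complex.normSq (∑ n, ξ n * φ n x k) : ℂ))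
      = ((∑ k, Complex.normSq (∑ n, ξ n * φ n x k) : ℝ) : ℂ) from by push_cast; rfl,
      Complex.ofReal_re]
    exact Finset.sum_nonneg fun k _ => Complex.normSq_nonneg _
  have hkey : ∀ ξ : Fin N → ℂ, (∑ n, Complex.normSq (ξ n)) = 1 →
      ((dotProduct (star ξ) (G *ᵥ ξ)).re)^2 ≤
        (dotProduct (star ξ) (Kmat *ᵥ ξ)).re := by
    intro ξ hξ
    have hwd : ∀ k : Fin M, Differentiable ℝ (fun t => ∑ n, ξ n * φ n t k) := by
      intro k
      apply Differentiable.fun_sum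
      intro n _
      exact (hdiff n k).const_mul (ξ n)
    have hwderiv : ∀ (k : Fin M) (y : ℝ), deriv (fun t => ∑ n, ξ n * φ n t k) y
        = ∑ n, ξ n * deriv (fun t => φ n t k) y := by
      intro k y
      exact (HasDerivAt.fun_sum fun n _ => ((hdiff n k y).hasDerivAt).const_mul (ξ n)).deriv
    have hw2 : ∀ k : Fin M, MemLp (fun t => ∑ n, ξ n * φ n t k) 2 (volume : Measure ℝ) :=
      fun k => memLp_finset_sum _ fun n _ => (hL2 n k).const_mul (ξ n)
    have hw2' : ∀ k : Fin M, MemLp (deriv (fun t => ∑ n, ξ n * φ n t k)) 2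
        (volume : Measure ℝ) := by
      intro k
      have h := memLp_finset_sum (μ := (volume : Measure ℝ)) Finset.univ
        (fun n (_ : n ∈ Finset.univ) => (hL2' n k).const_mul (ξ n))
      rw [show deriv (fun t => ∑ n, ξ n * φ n t k)
        = fun y => ∑ n, ξ n * deriv (fun t => φ n t k) y from funext (hwderiv k)]
      exact h
    have hGre : (dotProduct (star ξ) (G *ᵥ ξ)).re
        = ∑ k, Complex.normSq (∑ n, ξ n * φ n x k) := by
      rw [hQFG ξ, show (∑ k, (Complex.normSq (∑ n, ξ n * φ n x k) : ℂ))
        = ((∑ k, Complex.normSq (∑ n, ξ n * φ n x k) : ℝ) : ℂ) from by push_cast; rfl,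
        Complex.ofReal_re]
    have hKre : (dotProduct (star ξ) (Kmat *ᵥ ξ)).re
        = ∫ y : ℝ, ∑ k, Complex.normSq (deriv (fun t => ∑ n, ξ n * φ n t k) y) := by
      rw [hQFK ξ, Complex.ofReal_re]
      refine integral_congr_ae (Filter.Eventually.of_forall fun y => ?_)
      refine Finset.sum_congr rfl fun k _ => ?_
      rw [hwderiv k y]
    rw [hGre, hKre]
    have hone : (∫ y : ℝ, ∑ k, Complex.normSq ((fun k t => ∑ n, ξ n * φ n t k) k y)) ≤ 1 :=
      le_of_eq (hone_c ξ hξ)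
    exact sobolev_pointwise M (fun k t => ∑ n, ξ n * φ n t k) hwd hw2 hw2' hone x
  calc (Matrix.trace (U x x ^ 3)).re = (Matrix.trace (G ^ 3)).re := hLHS
    _ ≤ (Matrix.trace (Kmat * G)).re := trace_cube_le_trace_mul G Kmat hherm hGpos hkey
    _ = _ := hRHSint.symm
end
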